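/- For every ℓ with 0 < ℓ < 2·arsinh(1) and all q, s ∈ [−X(ℓ), X(ℓ)], one has ρ_ℓ(s)^{−2}·e^{−2|s − q|/3} ≤ ρ_ℓ(q)^{−2}, where ρ_ℓ(s) = ℓ/(2π·cos(ℓ·s/(2π))) and X(ℓ) = (2π/ℓ)·(π/2 − arctan(sinh(ℓ/2))). Equivalently, for fixed q the function s ↦ ρ_ℓ(s)^{−2}·e^{−2|s−q|/3} on [−X(ℓ), X(ℓ)] is maximised at s = q. -/

import Mathlib

/-- Half-length of the hyperbolic collar around a geodesic of length `ℓ`. -/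
noncomputable def collarX (ℓ : ℝ) : ℝ :=
  2 * Real.pi / ℓ * (Real.pi / 2 - Real.arctan (Real.sinh (ℓ / 2)))

/-- Conformal factor of the hyperbolic collar. -/
noncomputable def collarRho (ℓ s : ℝ) : ℝ :=
  ℓ / (2 * Real.pi * Real.cos (ℓ * s / (2 * Real.pi)))

/-- For fixed `q`, the function `s ↦ ρ_ℓ(s)⁻²·e^{-2|s-q|/3}` on `[-X(ℓ), X(ℓ)]`
is maximised at `s = q`. -/
theorem collarRho_weight_maximised (ℓ : ℝ) (h0 : 0 < ℓ) (h1 : ℓ < 2 * Real.arsinh 1)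
    (q s : ℝ) (hq : q ∈ Set.Icc (-(collarX ℓ)) (collarX ℓ))
    (hs : s ∈ Set.Icc (-(collarX ℓ)) (collarX ℓ)) :
    (collarRho ℓ s ^ 2)⁻¹ * Real.exp (-(2 * |s - q|) / 3) ≤ (collarRho ℓ q ^ 2)⁻¹ := by
  have hπ := Real.pi_pos
  set t : ℝ := ℓ / (2 * Real.pi) with ht
  have ht0 : 0 < t := div_pos h0 (by positivity)
  set X := collarX ℓ with hX
  -- t * X = π/2 - arctan (sinh (ℓ/2))
  have htX : t * X = Real.pi / 2 - Real.arctan (Real.sinh (ℓ / 2)) := by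
    rw [hX, collarX, ht]; field_simp
  have hsinh : 0 < Real.sinh (ℓ / 2) := by rw [← Real.sinh_zero]; exact Real.sinh_lt_sinh.mpr (by linarith)
  have harctan : 0 < Real.arctan (Real.sinh (ℓ / 2)) := by rw [← Real.arctan_zero]; exact Real.arctan_strictMono hsinh
  have htX2 : t * X < Real.pi / 2 := by rw [htX]; linarith
  have htX0 : 0 ≤ t * X := by
    rw [htX]
    have := Real.arctan_lt_pi_div_two (Real.sinh (ℓ / 2))
    linarith
  have hX0 : 0 ≤ X := nonneg_of_mul_nonneg_right htX0 ht0
  -- tan (t*X) = (sinh (ℓ/2))⁻¹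
  have htan : Real.tan (t * X) = (Real.sinh (ℓ / 2))⁻¹ := by
    rw [htX, Real.tan_pi_div_two_sub, Real.tan_arctan]
  -- cos positive on the range
  have hcos : ∀ u ∈ Set.Icc (-X) X, 0 < Real.cos (t * u) := by
    intro u hu
    apply Real.cos_pos_of_mem_Ioo
    constructor
    · have : -(t * X) ≤ t * u := by nlinarith [hu.1]
      linarith
    · nlinarith [hu.2]
  -- derivative bound
  have hbound : ∀ u ∈ Set.Icc (-X) X, t * |Real.tan (t * u)| ≤ 1 / 3 := by
    intro u hu
    have h1 : |Real.tan (t * u)| = Real.tan (t * |u|) := by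
      rcases abs_cases u with ⟨h, hu0⟩ | ⟨h, hu0⟩
      · rw [h, abs_of_nonneg]
        exact Real.tan_nonneg_of_nonneg_of_le_pi_div_two (by positivity)
          (by nlinarith [hu.2])
      · rw [h, mul_neg, Real.tan_neg, ← abs_neg, ← Real.tan_neg]
        rw [abs_of_nonneg]
        exact Real.tan_nonneg_of_nonneg_of_le_pi_div_two (by nlinarith)
          (by nlinarith [hu.1])
    have h2 : Real.tan (t * |u|) ≤ Real.tan (t * X) := by
      have h3 : |u| ≤ X := abs_le.mpr ⟨hu.1, hu.2⟩
      rcases eq_or_lt_of_le (mul_le_mul_of_nonneg_left h3 ht0.le) with h | h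
      · rw [h]
      · exact (Real.tan_lt_tan_of_nonneg_of_lt_pi_div_two
          (by positivity) htX2 h).le
    have h4 : t * Real.tan (t * X) ≤ 1 / 3 := by
      rw [htan, ht]
      have hs2 : ℓ / 2 ≤ Real.sinh (ℓ / 2) := Real.self_le_sinh_iff.mpr (by linarith)
      have hπ3 : (3 : ℝ) ≤ Real.pi := by linarith [Real.pi_gt_three]
      have hinv : ℓ * (Real.sinh (ℓ / 2))⁻¹ ≤ 2 := by
        rw [mul_inv_le_iff₀ hsinh]; linarith
      rw [div_mul_eq_mul_div, div_le_div_iff₀ (by positivity) (by norm_num)]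
      nlinarith
    calc t * |Real.tan (t * u)| = t * Real.tan (t * |u|) := by rw [h1]
      _ ≤ t * Real.tan (t * X) := by nlinarith
      _ ≤ 1 / 3 := h4
  -- MVT for f u = log (cos (t u))
  set f : ℝ → ℝ := fun u => Real.log (Real.cos (t * u)) with hf
  have hderiv : ∀ u ∈ Set.Icc (-X) X,
      HasDerivWithinAt f (-(Real.tan (t * u)) * t) (Set.Icc (-X) X) u := by
    intro u hu
    have hc : HasDerivAt (fun v : ℝ => Real.cos (t * v)) (-(Real.sin (t * u)) * t) u := by
      simpa [Function.comp_def] using (Real.hasDerivAt_cos (t * u)).comp u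
        ((hasDerivAt_id u).const_mul t)
    have hl : HasDerivAt f ((Real.cos (t * u))⁻¹ * (-(Real.sin (t * u)) * t)) u :=
      by have := (Real.hasDerivAt_log (hcos u hu).ne').comp u hc; exact this
    have : (Real.cos (t * u))⁻¹ * (-(Real.sin (t * u)) * t) = -(Real.tan (t * u)) * t := by
      rw [Real.tan_eq_sin_div_cos]; field_simp
    exact (this ▸ hl).hasDerivWithinAt
  have hmvt := Convex.norm_image_sub_le_of_norm_hasDerivWithin_le hderiv
    (fun u hu => by
      rw [Real.norm_eq_abs, abs_mul, abs_neg, abs_of_pos ht0, mul_comm]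
      exact hbound u hu)
    (convex_Icc _ _) hq hs
  rw [Real.norm_eq_abs, Real.norm_eq_abs, abs_sub_le_iff] at hmvt
  have hkey : f s ≤ f q + 1 / 3 * |s - q| := by linarith [hmvt.1]
  -- exponentiate
  have hcs := hcos s hs
  have hcq := hcos q hq
  have hexp : Real.cos (t * s) ≤ Real.cos (t * q) * Real.exp (|s - q| / 3) := by
    have := Real.exp_le_exp.mpr hkey
    rw [hf] at this
    simp only [Real.exp_add, Real.exp_log hcs, Real.exp_log hcq] at this
    calc Real.cos (t * s) ≤ Real.cos (t * q) * Real.exp (1/3 * |s - q|) := this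
      _ = Real.cos (t * q) * Real.exp (|s - q| / 3) := by ring_nf
  -- conclude
  have hrw : ∀ u, (collarRho ℓ u ^ 2)⁻¹ = (2 * Real.pi / ℓ) ^ 2 * Real.cos (t * u) ^ 2 := by
    intro u
    rw [collarRho, ht]
    field_simp
  rw [hrw, hrw]
  have hE : Real.exp (-(2 * |s - q|) / 3) * Real.exp (|s - q| / 3) ^ 2 = 1 := by
    rw [sq, ← Real.exp_add, ← Real.exp_add,
      show -(2 * |s - q|) / 3 + (|s - q| / 3 + |s - q| / 3) = 0 by ring, Real.exp_zero]
  have hsq : Real.cos (t * s) ^ 2 ≤ (Real.cos (t * q) * Real.exp (|s - q| / 3)) ^ 2 := by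
    apply sq_le_sq' _ hexp
    nlinarith [Real.exp_pos (|s - q| / 3)]
  have hE0 : 0 < Real.exp (-(2 * |s - q|) / 3) := Real.exp_pos _
  calc (2 * Real.pi / ℓ) ^ 2 * Real.cos (t * s) ^ 2 * Real.exp (-(2 * |s - q|) / 3)
      ≤ (2 * Real.pi / ℓ) ^ 2 * ((Real.cos (t * q) * Real.exp (|s - q| / 3)) ^ 2)
        * Real.exp (-(2 * |s - q|) / 3) := by
        have h2 : (0:ℝ) < (2 * Real.pi / ℓ) ^ 2 := by positivity
        exact mul_le_mul_of_nonneg_right (mul_le_mul_of_nonneg_left hsq h2.le) hE0.le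
    _ = (2 * Real.pi / ℓ) ^ 2 * Real.cos (t * q) ^ 2 *
        (Real.exp (-(2 * |s - q|) / 3) * Real.exp (|s - q| / 3) ^ 2) := by ring
    _ = (2 * Real.pi / ℓ) ^ 2 * Real.cos (t * q) ^ 2 := by rw [hE, mul_one]
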